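/- Let V be a steplike potential with steps V₊, V₋ and threshold x_M, let z ∈ ℂ, and let r₊, r₋ ∈ ℂ satisfy r₊² = z − V₊ and r₋² = z − V₋. Suppose u and v are solutions of −u'' + V u = z u, and there are constants T₋, R₋, T₊, R₊ ∈ ℂ with: u(x) = T₋ e^{−i r₋ x} for all x ≤ −x_M and u(x) = e^{−i r₊ x} + R₋ e^{i r₊ x} for all x ≥ x_M; v(x) = e^{i r₋ x} + R₊ e^{−i r₋ x} for all x ≤ −x_M and v(x) = T₊ e^{i r₊ x} for all x ≥ x_M. Then r₋ T₋ = r₊ T₊. -/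

import Mathlib

open Complex MeasureTheory
open scoped Classical

lemma aux_intInt {g p : ℝ → ℂ} {M : ℝ} (hg : Measurable g) (hgbd : ∀ t, ‖g t‖ ≤ M)
    (hp : Continuous p) (a b : ℝ) : IntervalIntegrable (fun s => g s * p s) volume a b := by
  obtain ⟨D, hD⟩ := (isCompact_uIcc (a := a) (b := b)).exists_bound_of_continuousOn
    hp.continuousOn
  rw [intervalIntegrable_iff]
  refine Integrable.mono' (g := fun _ => M * D) ((integrableOn_const_iff (C := M * D) enorm_ne_top).mpr (Or.inr ?_))
    ((hg.mul hp.measurable).aestronglyMeasurable) ?_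
  · exact measure_Ioc_lt_top
  · filter_upwards [ae_restrict_mem measurableSet_uIoc] with s hs
    rw [norm_mul]
    exact mul_le_mul (hgbd s) (hD s (Set.uIoc_subset_uIcc hs)) (norm_nonneg _)
      (le_trans (norm_nonneg _) (hgbd 0))

lemma aux_key {g p : ℝ → ℂ} {M : ℝ} (hg : Measurable g) (hgbd : ∀ t, ‖g t‖ ≤ M)
    (hp : Continuous p) (t : ℝ) (hpt : p t = 0) :
    HasDerivAt (fun x => ∫ s in t..x, g s * p s) 0 t := by
  have hc : ContinuousAt (fun s => g s * p s) t := by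
    have h0 : Filter.Tendsto (fun s => g s * p s) (nhds t) (nhds 0) := by
      have hb : Filter.Tendsto (fun s => M * ‖p s‖) (nhds t) (nhds 0) := by
        have := ((hp.tendsto t).norm).const_mul M
        rw [hpt] at this; simpa using this
      exact squeeze_zero_norm (fun s => by
        rw [norm_mul]; exact mul_le_mul_of_nonneg_right (hgbd s) (norm_nonneg _)) hb
    have : g t * p t = 0 := by rw [hpt, mul_zero]
    rw [ContinuousAt, this]; exact h0
  have := intervalIntegral.integral_hasDerivAt_right
    (aux_intInt hg hgbd hp t t)
    ((hg.mul hp.measurable).stronglyMeasurable.stronglyMeasurableAtFilter)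
    hc
  simpa [hpt] using this

/-- The primitive `x ↦ ∫₀ˣ g p` is `O(x - t)` near `t`. -/
lemma aux_bigO {g p : ℝ → ℂ} {M : ℝ} (hg : Measurable g) (hgbd : ∀ t, ‖g t‖ ≤ M)
    (hp : Continuous p) (t : ℝ) :
    (fun x => (∫ s in (0:ℝ)..x, g s * p s) - ∫ s in (0:ℝ)..t, g s * p s)
      =O[nhds t] fun x => x - t := by
  obtain ⟨D, hD⟩ := (isCompact_Icc (a := t - 1) (b := t + 1)).exists_bound_of_continuousOn
    hp.continuousOn
  rw [Asymptotics.isBigO_iff]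
  refine ⟨M * D, ?_⟩
  filter_upwards [Metric.ball_mem_nhds t one_pos] with x hx
  have hdist : |x - t| < 1 := by
    simpa [Real.dist_eq] using hx
  have hsub : Set.uIoc t x ⊆ Set.Icc (t - 1) (t + 1) := by
    intro s hs
    have h1 := Set.uIoc_subset_uIcc hs
    rcases Set.mem_uIcc.mp h1 with h | h
    · constructor
      · linarith [h.1, abs_lt.mp hdist |>.1, abs_lt.mp hdist |>.2]
      · rcases abs_lt.mp hdist with ⟨ha, hb⟩; linarith [h.2]
    · rcases abs_lt.mp hdist with ⟨ha, hb⟩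
      exact ⟨by linarith [h.1], by linarith [h.2]⟩
  have heq : (∫ s in (0:ℝ)..x, g s * p s) - ∫ s in (0:ℝ)..t, g s * p s
      = ∫ s in t..x, g s * p s :=
    intervalIntegral.integral_interval_sub_left (aux_intInt hg hgbd hp 0 x)
      (aux_intInt hg hgbd hp 0 t)
  rw [heq]
  have : ‖∫ s in t..x, g s * p s‖ ≤ M * D * |x - t| := by
    apply intervalIntegral.norm_integral_le_of_norm_le_const
    intro s hs
    rw [norm_mul]
    exact mul_le_mul (hgbd s) (hD s (hsub hs)) (norm_nonneg _)
      (le_trans (norm_nonneg _) (hgbd 0))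
  simpa [Real.norm_eq_abs] using this

lemma aux_exp (c : ℂ) (x : ℝ) :
    HasDerivAt (fun y : ℝ => Complex.exp (c * y)) (c * Complex.exp (c * x)) x := by
  have h : HasDerivAt (fun w : ℂ => Complex.exp (c * w)) (Complex.exp (c * (x:ℂ)) * c) (x : ℂ) := by
    simpa using ((hasDerivAt_id ((x:ℂ))).const_mul c).cexp
  simpa [mul_comm] using h.comp_ofReal

/-- `u` is a solution of `-u'' + V u = z u`: `u` is differentiable with continuous
derivative, and the derivative satisfies the integrated form of the ODE. -/
def IsSolution (V : ℝ → ℝ) (z : ℂ) (u : ℝ → ℂ) : Prop :=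
  Differentiable ℝ u ∧ Continuous (deriv u) ∧
    ∀ x : ℝ, deriv u x = deriv u 0 + ∫ t in (0:ℝ)..x, ((V t : ℂ) - z) * u t

theorem transmission_relation
    (V : ℝ → ℝ) (Vp Vm xM : ℝ)
    (hVmeas : Measurable V) (hVbdd : ∃ C : ℝ, ∀ x : ℝ, |V x| ≤ C)
    (hxM : 0 < xM)
    (hVp : ∀ x : ℝ, xM < x → V x = Vp)
    (hVm : ∀ x : ℝ, x < -xM → V x = Vm)
    (z rp rm : ℂ) (hrp : rp ^ 2 = z - (Vp : ℂ)) (hrm : rm ^ 2 = z - (Vm : ℂ))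
    (u v : ℝ → ℂ) (hu : IsSolution V z u) (hv : IsSolution V z v)
    (Tm Rm Tp Rp : ℂ)
    (huL : ∀ x : ℝ, x ≤ -xM → u x = Tm * Complex.exp (-(Complex.I * rm * x)))
    (huR : ∀ x : ℝ, xM ≤ x →
      u x = Complex.exp (-(Complex.I * rp * x)) + Rm * Complex.exp (Complex.I * rp * x))
    (hvL : ∀ x : ℝ, x ≤ -xM →
      v x = Complex.exp (Complex.I * rm * x) + Rp * Complex.exp (-(Complex.I * rm * x)))
    (hvR : ∀ x : ℝ, xM ≤ x → v x = Tp * Complex.exp (Complex.I * rp * x)) :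
    rm * Tm = rp * Tp := by
  obtain ⟨C, hC⟩ := hVbdd
  obtain ⟨hudiff, hucont, huode⟩ := hu
  obtain ⟨hvdiff, hvcont, hvode⟩ := hv
  have huc : Continuous u := hudiff.continuous
  have hvc : Continuous v := hvdiff.continuous
  set g : ℝ → ℂ := fun t => ((V t : ℂ) - z) with hgdef
  have hgmeas : Measurable g :=
    (Complex.measurable_ofReal.comp hVmeas).sub measurable_const
  have hgbd : ∀ t, ‖g t‖ ≤ C + ‖z‖ := by
    intro t
    calc ‖g t‖ ≤ ‖((V t : ℝ) : ℂ)‖ + ‖z‖ := norm_sub_le _ _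
      _ ≤ C + ‖z‖ := by
        have : ‖((V t : ℝ) : ℂ)‖ = |V t| := by
          rw [Complex.norm_real, Real.norm_eq_abs]
        rw [this]
        exact add_le_add (hC t) le_rfl
  -- the Wronskian has zero derivative everywhere
  have hW0 : ∀ t : ℝ, HasDerivAt (fun x => u x * deriv v x - deriv u x * v x) 0 t := by
    intro t
    have hWeq : (fun x => u x * deriv v x - deriv u x * v x)
        = fun x => ((deriv v 0 + ∫ s in (0:ℝ)..t, g s * v s) * u x
              - (deriv u 0 + ∫ s in (0:ℝ)..t, g s * u s) * v x)
          + (∫ s in t..x, g s * (u t * v s - v t * u s))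
          + ((u x - u t) * ((∫ s in (0:ℝ)..x, g s * v s) - ∫ s in (0:ℝ)..t, g s * v s)
            - (v x - v t) * ((∫ s in (0:ℝ)..x, g s * u s) - ∫ s in (0:ℝ)..t, g s * u s)) := by
      funext x
      have h1 : (∫ s in t..x, g s * (u t * v s - v t * u s))
          = u t * ((∫ s in (0:ℝ)..x, g s * v s) - ∫ s in (0:ℝ)..t, g s * v s)
            - v t * ((∫ s in (0:ℝ)..x, g s * u s) - ∫ s in (0:ℝ)..t, g s * u s) := by
        have he : (fun s => g s * (u t * v s - v t * u s))
            = fun s => u t * (g s * v s) - v t * (g s * u s) := by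
          funext s; ring
        rw [he, intervalIntegral.integral_sub
            ((aux_intInt hgmeas hgbd hvc t x).const_mul _)
            ((aux_intInt hgmeas hgbd huc t x).const_mul _),
          intervalIntegral.integral_const_mul, intervalIntegral.integral_const_mul,
          ← intervalIntegral.integral_interval_sub_left (aux_intInt hgmeas hgbd hvc 0 x)
            (aux_intInt hgmeas hgbd hvc 0 t),
          ← intervalIntegral.integral_interval_sub_left (aux_intInt hgmeas hgbd huc 0 x)
            (aux_intInt hgmeas hgbd huc 0 t)]
      rw [h1, huode x, hvode x]
      ring
    rw [hWeq]
    have hA : HasDerivAt (fun x => (deriv v 0 + ∫ s in (0:ℝ)..t, g s * v s) * u x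
        - (deriv u 0 + ∫ s in (0:ℝ)..t, g s * u s) * v x) 0 t := by
      have h1 := ((hudiff t).hasDerivAt).const_mul
        (deriv v 0 + ∫ s in (0:ℝ)..t, g s * v s)
      have h2 := ((hvdiff t).hasDerivAt).const_mul
        (deriv u 0 + ∫ s in (0:ℝ)..t, g s * u s)
      have h3 := h1.sub h2
      refine h3.congr_deriv ?_
      rw [huode t, hvode t]
      ring
    have hB : HasDerivAt (fun x => ∫ s in t..x, g s * (u t * v s - v t * u s)) 0 t :=
      aux_key hgmeas hgbd ((continuous_const.mul hvc).sub (continuous_const.mul huc)) t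
        (by simp only [Pi.sub_apply, Pi.mul_apply]; ring)
    have hCd : HasDerivAt (fun x =>
        (u x - u t) * ((∫ s in (0:ℝ)..x, g s * v s) - ∫ s in (0:ℝ)..t, g s * v s)
        - (v x - v t) * ((∫ s in (0:ℝ)..x, g s * u s) - ∫ s in (0:ℝ)..t, g s * u s)) 0 t := by
      have hOF := aux_bigO hgmeas hgbd hvc t
      have hOG := aux_bigO hgmeas hgbd huc t
      have hou : (fun x => u x - u t) =o[nhds t] (fun _ => (1:ℝ)) := by
        rw [Asymptotics.isLittleO_one_iff]
        have := (huc.tendsto t).sub_const (u t)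
        simpa using this
      have hov : (fun x => v x - v t) =o[nhds t] (fun _ => (1:ℝ)) := by
        rw [Asymptotics.isLittleO_one_iff]
        have := (hvc.tendsto t).sub_const (v t)
        simpa using this
      have h1 := hou.mul_isBigO hOF
      have h2 := hov.mul_isBigO hOG
      have h3 := h1.sub h2
      rw [hasDerivAt_iff_isLittleO]
      simpa using h3
    exact ((hA.add hB).add hCd).congr_deriv (by simp)
  have hWd : Differentiable ℝ (fun x => u x * deriv v x - deriv u x * v x) :=
    fun t => (hW0 t).differentiableAt
  have hconst := is_const_of_deriv_eq_zero hWd (fun t => (hW0 t).deriv) (xM + 1) (-(xM + 1))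
  -- derivatives at the endpoints
  have haR : xM ≤ xM + 1 := by linarith
  have hbL : -(xM + 1) ≤ -xM := by linarith
  have hua : u =ᶠ[nhds (xM + 1)] fun x : ℝ =>
      Complex.exp (-(Complex.I * rp * x)) + Rm * Complex.exp (Complex.I * rp * x) := by
    filter_upwards [lt_mem_nhds (show xM < xM + 1 by linarith)] with x hx
    exact huR x hx.le
  have hva : v =ᶠ[nhds (xM + 1)] fun x : ℝ => Tp * Complex.exp (Complex.I * rp * x) := by
    filter_upwards [lt_mem_nhds (show xM < xM + 1 by linarith)] with x hx
    exact hvR x hx.le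
  have hub : u =ᶠ[nhds (-(xM + 1))] fun x : ℝ =>
      Tm * Complex.exp (-(Complex.I * rm * x)) := by
    filter_upwards [gt_mem_nhds (show -(xM + 1) < -xM by linarith)] with x hx
    exact huL x hx.le
  have hvb : v =ᶠ[nhds (-(xM + 1))] fun x : ℝ =>
      Complex.exp (Complex.I * rm * x) + Rp * Complex.exp (-(Complex.I * rm * x)) := by
    filter_upwards [gt_mem_nhds (show -(xM + 1) < -xM by linarith)] with x hx
    exact hvL x hx.le
  have hdua : HasDerivAt u
      (-(Complex.I * rp * Complex.exp (-(Complex.I * rp * ((xM + 1 : ℝ) : ℂ))))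
        + Rm * (Complex.I * rp * Complex.exp (Complex.I * rp * ((xM + 1 : ℝ) : ℂ))))
      (xM + 1) := by
    have h1 := aux_exp (-(Complex.I * rp)) (xM + 1)
    have h2 := (aux_exp (Complex.I * rp) (xM + 1)).const_mul Rm
    simp only [neg_mul] at h1
    exact (h1.add h2).congr_of_eventuallyEq hua
  have hdva : HasDerivAt v
      (Tp * ((Complex.I * rp) * Complex.exp (Complex.I * rp * ((xM + 1 : ℝ) : ℂ))))
      (xM + 1) := by
    have h2 := (aux_exp (Complex.I * rp) (xM + 1)).const_mul Tp
    exact h2.congr_of_eventuallyEq hva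
  have hdub : HasDerivAt u
      (Tm * -(Complex.I * rm * Complex.exp (-(Complex.I * rm * ((-(xM + 1) : ℝ) : ℂ)))))
      (-(xM + 1)) := by
    have h1 := (aux_exp (-(Complex.I * rm)) (-(xM + 1))).const_mul Tm
    simp only [neg_mul] at h1
    exact h1.congr_of_eventuallyEq hub
  have hdvb : HasDerivAt v
      (Complex.I * rm * Complex.exp (Complex.I * rm * ((-(xM + 1) : ℝ) : ℂ))
        + Rp * -(Complex.I * rm * Complex.exp (-(Complex.I * rm * ((-(xM + 1) : ℝ) : ℂ)))))
      (-(xM + 1)) := by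
    have h1 := aux_exp (Complex.I * rm) (-(xM + 1))
    have h2 := (aux_exp (-(Complex.I * rm)) (-(xM + 1))).const_mul Rp
    simp only [neg_mul] at h2
    exact (h1.add h2).congr_of_eventuallyEq hvb
  -- evaluate the Wronskian at the endpoints
  have hexpa : Complex.exp (-(Complex.I * rp * ((xM + 1 : ℝ) : ℂ)))
      * Complex.exp (Complex.I * rp * ((xM + 1 : ℝ) : ℂ)) = 1 := by
    rw [← Complex.exp_add, show -(Complex.I * rp * ((xM + 1 : ℝ) : ℂ))
      + Complex.I * rp * ((xM + 1 : ℝ) : ℂ) = 0 by ring, Complex.exp_zero]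
  have hexpb : Complex.exp (-(Complex.I * rm * ((-(xM + 1) : ℝ) : ℂ)))
      * Complex.exp (Complex.I * rm * ((-(xM + 1) : ℝ) : ℂ)) = 1 := by
    rw [← Complex.exp_add, show -(Complex.I * rm * ((-(xM + 1) : ℝ) : ℂ))
      + Complex.I * rm * ((-(xM + 1) : ℝ) : ℂ) = 0 by ring, Complex.exp_zero]
  have hWa : u (xM + 1) * deriv v (xM + 1) - deriv u (xM + 1) * v (xM + 1)
      = 2 * Complex.I * rp * Tp := by
    rw [huR _ haR, hvR _ haR, hdua.deriv, hdva.deriv]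
    linear_combination (2 * Complex.I * rp * Tp) * hexpa
  have hWb : u (-(xM + 1)) * deriv v (-(xM + 1)) - deriv u (-(xM + 1)) * v (-(xM + 1))
      = 2 * Complex.I * rm * Tm := by
    rw [huL _ hbL, hvL _ hbL, hdub.deriv, hdvb.deriv]
    linear_combination (2 * Complex.I * rm * Tm) * hexpb
  have hkey : 2 * Complex.I * rp * Tp = 2 * Complex.I * rm * Tm := by
    rw [← hWa, ← hWb]
    simpa using hconst
  have h2I : (2 : ℂ) * Complex.I ≠ 0 := by
    simp [Complex.I_ne_zero]
  have := mul_left_cancel₀ h2I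
    (show (2 * Complex.I) * (rp * Tp) = (2 * Complex.I) * (rm * Tm) by
      linear_combination hkey)
  exact this.symm
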